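/- Let c ≥ 2 and ρ ≥ 1 be integers, let G be a finite simple graph on a vertex type with keyword assignment A : V → K, and let φ be a finite set of keywords. Suppose some subgraph of G satisfies both the c-truss support condition and the minimum ρ keyword vertex constraint (applied to its vertex set). Then there exists a greatest such subgraph M of G: M satisfies both conditions, and every subgraph of G satisfying both conditions is a subgraph of M. -/
import Mathlib


/-- **Existence of the maximal `(ρ,c)`-truss.** If some subgraph of a finite
simple graph `G` satisfies both the `c`-truss support condition and the minimum
`ρ` keyword vertex constraint, then there is a greatest such subgraph `M`:
`M` satisfies both conditions and contains every subgraph satisfying them. -/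
theorem maximal_rho_c_truss_exists {V K : Type*} [Fintype V]
    (c ρ : ℕ) (hc : 2 ≤ c) (hρ : 1 ≤ ρ)
    (G : SimpleGraph V) (A : V → K) (φ : Finset K)
    (h : ∃ S : G.Subgraph,
      (∀ u v : V, S.Adj u v → c - 2 ≤ {w : V | S.Adj u w ∧ S.Adj v w}.ncard) ∧
      (∀ k ∈ φ, ρ ≤ {v ∈ S.verts | A v = k}.ncard)) :
    ∃ M : G.Subgraph,
      ((∀ u v : V, M.Adj u v → c - 2 ≤ {w : V | M.Adj u w ∧ M.Adj v w}.ncard) ∧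
        (∀ k ∈ φ, ρ ≤ {v ∈ M.verts | A v = k}.ncard)) ∧
      ∀ S : G.Subgraph,
        ((∀ u v : V, S.Adj u v → c - 2 ≤ {w : V | S.Adj u w ∧ S.Adj v w}.ncard) ∧
          (∀ k ∈ φ, ρ ≤ {v ∈ S.verts | A v = k}.ncard)) → S ≤ M := by
  classical
  set P : Set G.Subgraph := {S |
    (∀ u v : V, S.Adj u v → c - 2 ≤ {w : V | S.Adj u w ∧ S.Adj v w}.ncard) ∧
    (∀ k ∈ φ, ρ ≤ {v ∈ S.verts | A v = k}.ncard)} with hP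
  obtain ⟨S₀, hS₀⟩ := h
  have hS₀P : S₀ ∈ P := hS₀
  refine ⟨sSup P, ⟨?_, ?_⟩, fun S hS => le_sSup hS⟩
  · intro u v huv
    rw [SimpleGraph.Subgraph.sSup_adj] at huv
    obtain ⟨S, hSP, hadj⟩ := huv
    refine le_trans (hSP.1 u v hadj) (Set.ncard_le_ncard ?_ (Set.toFinite _))
    intro w hw
    exact ⟨(SimpleGraph.Subgraph.sSup_adj).2 ⟨S, hSP, hw.1⟩,
      (SimpleGraph.Subgraph.sSup_adj).2 ⟨S, hSP, hw.2⟩⟩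
  · intro k hk
    refine le_trans (hS₀.2 k hk) (Set.ncard_le_ncard ?_ (Set.toFinite _))
    intro v hv
    refine ⟨?_, hv.2⟩
    have : S₀.verts ⊆ (sSup P).verts :=
      SimpleGraph.Subgraph.verts_mono (le_sSup hS₀P)
    exact this hv.1
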